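/- Let X = {x_1,...,x_n} be a finite set of points in an open hemisphere of the sphere S^d that is not k-divisible, i.e., for every partition of X into two sets A, B there exists a k-element subset K ⊆ X with conv(A \ K) ∩ conv(B \ K) = ∅. Then there exists η > 0 such that every set X' = {x_1',...,x_n'} with ‖x_i − x_i'‖ < η for all i is also not k-divisible and lies in the same open hemisphere. -/

import Mathlib

/-- A family of points is `k`-divisible if it can be partitioned (via a sign
function `σ`) into two parts such that, after removing any `k` of the points,
the convex hulls of the two parts still intersect. -/
def KDivisible {d n : ℕ} (k : ℕ) (x : Fin n → EuclideanSpace ℝ (Fin (d + 1))) : Prop :=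
  ∃ σ : Fin n → Bool,
    ∀ K : Finset (Fin n), K.card = k →
      ((convexHull ℝ (x '' {i | σ i = true ∧ i ∉ K})) ∩
        (convexHull ℝ (x '' {i | σ i = false ∧ i ∉ K}))).Nonempty

/-- Not being `k`-divisible is an open condition for point sets in an open
hemisphere of the sphere `S^d`. -/
theorem stmt1 {d n k : ℕ} (x : Fin n → EuclideanSpace ℝ (Fin (d + 1)))
    (hsphere : ∀ i, ‖x i‖ = 1)
    (v : EuclideanSpace ℝ (Fin (d + 1)))
    (hhemi : ∀ i, 0 < (inner ℝ v (x i) : ℝ))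
    (hnd : ¬ KDivisible k x) :
    ∃ η > (0 : ℝ), ∀ x' : Fin n → EuclideanSpace ℝ (Fin (d + 1)),
      (∀ i, ‖x i - x' i‖ < η) →
      ¬ KDivisible k x' ∧ ∀ i, 0 < (inner ℝ v (x' i) : ℝ) := by
  classical
  simp only [KDivisible, not_exists, not_forall] at hnd
  choose K hKcard hKdisj using hnd
  -- separating functionals
  have hsep : ∀ σ : Fin n → Bool, ∃ (f : EuclideanSpace ℝ (Fin (d+1)) →L[ℝ] ℝ) (u w : ℝ),
      (∀ i, σ i = true ∧ i ∉ K σ → f (x i) < u) ∧ u < w ∧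
      (∀ i, σ i = false ∧ i ∉ K σ → w < f (x i)) := by
    intro σ
    have hA : (Set.Finite (x '' {i | σ i = true ∧ i ∉ K σ})) := (Set.finite_univ.subset (Set.subset_univ _)).image _
    have hB : (Set.Finite (x '' {i | σ i = false ∧ i ∉ K σ})) := (Set.finite_univ.subset (Set.subset_univ _)).image _
    have hdisj : Disjoint (convexHull ℝ (x '' {i | σ i = true ∧ i ∉ K σ}))
        (convexHull ℝ (x '' {i | σ i = false ∧ i ∉ K σ})) := by
      rw [Set.disjoint_iff_inter_eq_empty, ← Set.not_nonempty_iff_eq_empty]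
      exact hKdisj σ
    obtain ⟨f, u, w, h1, h2, h3⟩ := _root_.geometric_hahn_banach_compact_closed
      (convex_convexHull ℝ _) (hA.isCompact_convexHull (𝕜 := ℝ)) (convex_convexHull ℝ _)
      (hB.isCompact_convexHull (𝕜 := ℝ)).isClosed hdisj
    exact ⟨f, u, w, fun i hi => h1 _ (subset_convexHull ℝ _ ⟨i, hi, rfl⟩), h2,
      fun i hi => h3 _ (subset_convexHull ℝ _ ⟨i, hi, rfl⟩)⟩
  choose f u w hu huw hw using hsep
  set η₁ : ℝ := (Finset.univ.inf' Finset.univ_nonempty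
    (fun σ : Fin n → Bool => (w σ - u σ) / (2 * (‖f σ‖ + 1)))) with hη₁
  have hη₁pos : 0 < η₁ := by
    rw [hη₁, Finset.lt_inf'_iff]
    intro σ _
    have : 0 < ‖f σ‖ + 1 := by positivity
    exact div_pos (by linarith [huw σ]) (by linarith)
  set η₂ : ℝ := if hn : n = 0 then 1 else
    (Finset.univ.inf' (by haveI : NeZero n := ⟨hn⟩; exact Finset.univ_nonempty)
      (fun i => (inner ℝ v (x i) : ℝ) / (‖v‖ + 1))) with hη₂
  have hη₂pos : 0 < η₂ := by
    rw [hη₂]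
    split
    · norm_num
    · rename_i hn
      have : NeZero n := ⟨hn⟩
      rw [Finset.lt_inf'_iff]
      intro i _
      exact div_pos (hhemi i) (by positivity)
  refine ⟨min η₁ η₂, lt_min hη₁pos hη₂pos, fun x' hx' => ⟨?_, ?_⟩⟩
  · rintro ⟨σ, hσ⟩
    obtain ⟨y, hyA, hyB⟩ := hσ (K σ) (hKcard σ)
    set m : ℝ := (u σ + w σ) / 2 with hm
    have hησ : min η₁ η₂ ≤ (w σ - u σ) / (2 * (‖f σ‖ + 1)) :=
      (min_le_left _ _).trans (Finset.inf'_le _ (Finset.mem_univ σ))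
    have hfpos : (0:ℝ) < ‖f σ‖ + 1 := by positivity
    have key : ∀ i, ‖x i - x' i‖ < min η₁ η₂ → |f σ (x' i) - f σ (x i)| ≤ (w σ - u σ) / 2 := by
      intro i hi
      have h1 : |f σ (x' i) - f σ (x i)| ≤ ‖f σ‖ * ‖x i - x' i‖ := by
        rw [← map_sub]
        calc |f σ (x' i - x i)| = ‖f σ (x' i - x i)‖ := rfl
        _ ≤ ‖f σ‖ * ‖x' i - x i‖ := (f σ).le_opNorm _
        _ = ‖f σ‖ * ‖x i - x' i‖ := by rw [norm_sub_rev]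
      have h2 : ‖f σ‖ * ‖x i - x' i‖ ≤ ‖f σ‖ * ((w σ - u σ) / (2 * (‖f σ‖ + 1))) := by
        apply mul_le_mul_of_nonneg_left (le_of_lt (lt_of_lt_of_le hi hησ)) (norm_nonneg _)
      have h3 : ‖f σ‖ * ((w σ - u σ) / (2 * (‖f σ‖ + 1))) ≤ (w σ - u σ) / 2 := by
        have hc : (0:ℝ) ≤ w σ - u σ := by linarith [huw σ]
        have hb : ‖f σ‖ / (2 * (‖f σ‖ + 1)) ≤ 1 / 2 := by
          rw [div_le_div_iff₀ (by positivity) (by norm_num)]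
          nlinarith [norm_nonneg (f σ)]
        calc ‖f σ‖ * ((w σ - u σ) / (2 * (‖f σ‖ + 1)))
            = (w σ - u σ) * (‖f σ‖ / (2 * (‖f σ‖ + 1))) := by ring
          _ ≤ (w σ - u σ) * (1 / 2) := mul_le_mul_of_nonneg_left hb hc
          _ = (w σ - u σ) / 2 := by ring
      linarith
    have hAlt : ∀ z ∈ convexHull ℝ (x' '' {i | σ i = true ∧ i ∉ K σ}), f σ z < m := by
      intro z hz
      have : convexHull ℝ (x' '' {i | σ i = true ∧ i ∉ K σ}) ⊆ {z | f σ z < m} := by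
        apply convexHull_min _ (convex_halfSpace_lt ⟨(f σ).map_add, (f σ).map_smul⟩ m)
        rintro _ ⟨i, hi, rfl⟩
        have h1 := hu σ i hi
        have h2 := key i (hx' i)
        have := abs_le.1 h2
        simp only [Set.mem_setOf_eq, hm]
        linarith [this.2]
      exact this hz
    have hBgt : ∀ z ∈ convexHull ℝ (x' '' {i | σ i = false ∧ i ∉ K σ}), m < f σ z := by
      intro z hz
      have : convexHull ℝ (x' '' {i | σ i = false ∧ i ∉ K σ}) ⊆ {z | m < f σ z} := by
        apply convexHull_min _ (convex_halfSpace_gt ⟨(f σ).map_add, (f σ).map_smul⟩ m)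
        rintro _ ⟨i, hi, rfl⟩
        have h1 := hw σ i hi
        have h2 := key i (hx' i)
        have := abs_le.1 h2
        simp only [Set.mem_setOf_eq, hm]
        linarith [this.1]
      exact this hz
    exact absurd (hAlt y hyA) (not_lt.2 (le_of_lt (hBgt y hyB)))
  · intro i
    have : NeZero n := ⟨fun h => (h ▸ i).elim0⟩
    have hn : n ≠ 0 := this.out
    have hη : min η₁ η₂ ≤ (inner ℝ v (x i) : ℝ) / (‖v‖ + 1) := by
      refine (min_le_right _ _).trans ?_
      rw [hη₂]
      rw [dif_neg hn]
      exact Finset.inf'_le _ (Finset.mem_univ i)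
    have h1 : |(inner ℝ v (x i) : ℝ) - inner ℝ v (x' i)| ≤ ‖v‖ * ‖x i - x' i‖ := by
      rw [← inner_sub_right]
      exact abs_real_inner_le_norm v _
    have hv1 : (0:ℝ) < ‖v‖ + 1 := by positivity
    have h3 : ‖v‖ * ((inner ℝ v (x i) : ℝ) / (‖v‖ + 1)) < inner ℝ v (x i) := by
      rw [mul_div_assoc', div_lt_iff₀ hv1]
      nlinarith [norm_nonneg v, hhemi i]
    have h4 : ‖v‖ * ‖x i - x' i‖ ≤ ‖v‖ * ((inner ℝ v (x i) : ℝ) / (‖v‖ + 1)) :=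
      mul_le_mul_of_nonneg_left (le_of_lt (lt_of_lt_of_le (hx' i) hη)) (norm_nonneg v)
    have h5 := abs_le.1 h1
    linarith [h5.2]
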